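/- arXiv:math-ph/0602043 — 2 statements merged into one kernel-verified Lean document; each statement's English description precedes it below -/
import Mathlib

section
/- The bilinear map μ₂((f,u),(g,v)) = ∫₀^{2π}∫₀^{2π} (f·v_y − g·u_y) dx dy is a 2-cocycle on the looped cotangent Virasoro algebra g̃: it is antisymmetric, μ₂((f,u),(g,v)) = −μ₂((g,v),(f,u)), and satisfies μ₂([a,b],c) + μ₂([b,c],a) + μ₂([c,a],b) = 0 for all a, b, c ∈ g̃. (This is the central extension of Kac–Moody type.) -/
open Real intervalIntegral
open scoped ContDiff

noncomputable section

/-- Functions on `ℝ²` (representing functions on the 2-torus `S¹ × S¹`). -/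
abbrev F2 : Type := ℝ × ℝ → ℂ

/-- `C∞₂π(ℝ²,ℂ)`: smooth functions `ℝ² → ℂ` which are `2π`-periodic in each variable. -/
def SmoothPer2 (f : F2) : Prop :=
  ContDiff ℝ ∞ f ∧ (∀ p : ℝ × ℝ, f (p.1 + 2 * π, p.2) = f p)
    ∧ (∀ p : ℝ × ℝ, f (p.1, p.2 + 2 * π) = f p)

/-- Partial derivative in the first variable `x`. -/
def pdx (f : F2) : F2 := fun p => deriv (fun t => f (t, p.2)) p.1

/-- Partial derivative in the second variable `y`. -/
def pdy (f : F2) : F2 := fun p => deriv (fun t => f (p.1, t)) p.2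

/-- Double integral `∫₀^{2π}∫₀^{2π} f dx dy` over the torus. -/
def integ2 (f : F2) : ℂ := ∫ y in (0:ℝ)..(2 * π), ∫ x in (0:ℝ)..(2 * π), f (x, y)

/-- Membership in the looped cotangent Virasoro algebra `g̃`: a pair `(f,u)` of
functions in `C∞₂π(ℝ²,ℂ)`, `f` representing the loop of vector fields `f(x,y)·∂/∂x`
and `u` the loop of quadratic differentials `u(x,y)·dx²`. -/
def MemG (a : F2 × F2) : Prop := SmoothPer2 a.1 ∧ SmoothPer2 a.2

/-- The Lie bracket of the looped cotangent Virasoro algebra `g̃ = L(Vect(S¹) ⋉ F₂)`: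
`[(f,u),(g,v)] = (f·g_x − f_x·g, f·v_x + 2·f_x·v − g·u_x − 2·g_x·u)`. -/
def gBracket (a b : F2 × F2) : F2 × F2 :=
  (fun p => a.1 p * pdx b.1 p - pdx a.1 p * b.1 p,
   fun p => a.1 p * pdx b.2 p + 2 * pdx a.1 p * b.2 p
     - b.1 p * pdx a.2 p - 2 * pdx b.1 p * a.2 p)

/-- The Kac–Moody-type 2-cocycle `μ₂((f,u),(g,v)) = ∫₀^{2π}∫₀^{2π} (f·v_y − g·u_y) dx dy`
on the looped cotangent Virasoro algebra `g̃`. -/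
def mu2 (a b : F2 × F2) : ℂ := integ2 (fun p => a.1 p * pdy b.2 p - b.1 p * pdy a.2 p)



def pdx' (f : ℝ × ℝ → ℂ) : ℝ × ℝ → ℂ := pdx f
def pdy' (f : ℝ × ℝ → ℂ) : ℝ × ℝ → ℂ := pdy f
lemma pdx'_def : pdx = pdx' := rfl
lemma pdy'_def : pdy = pdy' := rfl

variable {E : Type*} [NormedAddCommGroup E] [NormedSpace ℝ E]

lemma hasDerivAt_along_x (f : ℝ × ℝ → E) {p : ℝ × ℝ} (hf : DifferentiableAt ℝ f p) :
    HasDerivAt (fun t => f (t, p.2)) (fderiv ℝ f p (1, 0)) p.1 := by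
  have h1 : HasDerivAt (fun t : ℝ => (t, p.2)) ((1 : ℝ), (0 : ℝ)) p.1 :=
    (hasDerivAt_id p.1).prodMk (hasDerivAt_const _ _)
  have := hf.hasFDerivAt.comp_hasDerivAt p.1 (by simpa using h1)
  simpa [Function.comp_def] using this

lemma hasDerivAt_along_y (f : ℝ × ℝ → E) {p : ℝ × ℝ} (hf : DifferentiableAt ℝ f p) :
    HasDerivAt (fun t => f (p.1, t)) (fderiv ℝ f p (0, 1)) p.2 := by
  have h1 : HasDerivAt (fun t : ℝ => (p.1, t)) ((0 : ℝ), (1 : ℝ)) p.2 :=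
    (hasDerivAt_const _ _).prodMk (hasDerivAt_id p.2)
  have := hf.hasFDerivAt.comp_hasDerivAt p.2 (by simpa using h1)
  simpa [Function.comp_def] using this

lemma pdx_eq {f : ℝ × ℝ → ℂ} (hf : Differentiable ℝ f) (p : ℝ × ℝ) :
    pdx' f p = fderiv ℝ f p (1, 0) := (hasDerivAt_along_x f (hf p)).deriv

lemma pdy_eq {f : ℝ × ℝ → ℂ} (hf : Differentiable ℝ f) (p : ℝ × ℝ) :
    pdy' f p = fderiv ℝ f p (0, 1) := (hasDerivAt_along_y f (hf p)).deriv

lemma contDiff_pdx' {f : ℝ × ℝ → ℂ} (hf : ContDiff ℝ ∞ f) : ContDiff ℝ ∞ (pdx' f) := by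
  have : pdx' f = fun p => fderiv ℝ f p (1, 0) :=
    funext (pdx_eq (hf.differentiable (by norm_num)))
  rw [this]
  exact (hf.fderiv_right (le_of_eq rfl)).clm_apply contDiff_const

lemma contDiff_pdy' {f : ℝ × ℝ → ℂ} (hf : ContDiff ℝ ∞ f) : ContDiff ℝ ∞ (pdy' f) := by
  have : pdy' f = fun p => fderiv ℝ f p (0, 1) :=
    funext (pdy_eq (hf.differentiable (by norm_num)))
  rw [this]
  exact (hf.fderiv_right (le_of_eq rfl)).clm_apply contDiff_const

-- Clairaut
lemma pdy_pdx_eq_pdx_pdy {f : ℝ × ℝ → ℂ} (hf : ContDiff ℝ ∞ f) (p : ℝ × ℝ) :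
    pdy' (pdx' f) p = pdx' (pdy' f) p := by
  have hdf : Differentiable ℝ f := hf.differentiable (by norm_num)
  have hex : pdx' f = fun q => fderiv ℝ f q (1, 0) := funext (pdx_eq hdf)
  have hey : pdy' f = fun q => fderiv ℝ f q (0, 1) := funext (pdy_eq hdf)
  have hF : ContDiff ℝ ∞ (fderiv ℝ f) := hf.fderiv_right (le_of_eq rfl)
  have hFd : Differentiable ℝ (fderiv ℝ f) := hF.differentiable (by norm_num)
  have hsym : IsSymmSndFDerivAt ℝ f p :=
    (hf.contDiffAt).isSymmSndFDerivAt (by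
      rw [show ((2:WithTop ℕ∞)) = ((2:ℕ∞):WithTop ℕ∞) by norm_cast]
      rw [minSmoothness_of_isRCLikeNormedField]; exact WithTop.coe_le_coe.mpr (le_top (α := ℕ∞)))
  have h1 : pdy' (pdx' f) p = fderiv ℝ (fderiv ℝ f) p (0, 1) (1, 0) := by
    rw [hex]
    have := (hasDerivAt_along_y (fderiv ℝ f) (hFd p)).deriv
    calc pdy' (fun q => fderiv ℝ f q (1,0)) p
        = deriv (fun t => (fderiv ℝ f (p.1, t)) (1,0)) p.2 := rfl
      _ = fderiv ℝ (fderiv ℝ f) p (0,1) (1,0) := by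
          have h2 : HasDerivAt (fun t => (fderiv ℝ f (p.1, t)) (1,0))
              (fderiv ℝ (fderiv ℝ f) p (0,1) (1,0)) p.2 := by
            exact (hasDerivAt_along_y (fderiv ℝ f) (hFd p)).clm_apply
              (hasDerivAt_const _ _) |>.congr_deriv (by simp)
          exact h2.deriv
  have h2 : pdx' (pdy' f) p = fderiv ℝ (fderiv ℝ f) p (1, 0) (0, 1) := by
    rw [hey]
    have h2 : HasDerivAt (fun t => (fderiv ℝ f (t, p.2)) (0,1))
        (fderiv ℝ (fderiv ℝ f) p (1,0) (0,1)) p.1 := by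
      exact (hasDerivAt_along_x (fderiv ℝ f) (hFd p)).clm_apply
        (hasDerivAt_const _ _) |>.congr_deriv (by simp)
    exact h2.deriv
  rw [h1, h2, hsym]

lemma hasDerivAt_pdx {f : ℝ × ℝ → ℂ} (hf : Differentiable ℝ f) (p : ℝ × ℝ) :
    HasDerivAt (fun t => f (t, p.2)) (pdx' f p) p.1 :=
  ((hf.comp ((differentiable_id).prodMk (differentiable_const p.2))) p.1).hasDerivAt.congr_deriv rfl

lemma hasDerivAt_pdy {f : ℝ × ℝ → ℂ} (hf : Differentiable ℝ f) (p : ℝ × ℝ) :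
    HasDerivAt (fun t => f (p.1, t)) (pdy' f p) p.2 :=
  ((hf.comp ((differentiable_const p.1).prodMk differentiable_id)) p.2).hasDerivAt.congr_deriv rfl

lemma pdx_mul {f g : ℝ × ℝ → ℂ} (hf : Differentiable ℝ f) (hg : Differentiable ℝ g) (p : ℝ × ℝ) :
    pdx' (fun q => f q * g q) p = pdx' f p * g p + f p * pdx' g p := by
  have := ((hasDerivAt_pdx hf p).mul (hasDerivAt_pdx hg p)).deriv
  exact this

lemma pdy_mul {f g : ℝ × ℝ → ℂ} (hf : Differentiable ℝ f) (hg : Differentiable ℝ g) (p : ℝ × ℝ) :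
    pdy' (fun q => f q * g q) p = pdy' f p * g p + f p * pdy' g p := by
  have := ((hasDerivAt_pdy hf p).mul (hasDerivAt_pdy hg p)).deriv
  exact this

lemma pdx_add {f g : ℝ × ℝ → ℂ} (hf : Differentiable ℝ f) (hg : Differentiable ℝ g) (p : ℝ × ℝ) :
    pdx' (fun q => f q + g q) p = pdx' f p + pdx' g p := by
  have := ((hasDerivAt_pdx hf p).add (hasDerivAt_pdx hg p)).deriv
  exact this

lemma pdy_add {f g : ℝ × ℝ → ℂ} (hf : Differentiable ℝ f) (hg : Differentiable ℝ g) (p : ℝ × ℝ) :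
    pdy' (fun q => f q + g q) p = pdy' f p + pdy' g p := by
  have := ((hasDerivAt_pdy hf p).add (hasDerivAt_pdy hg p)).deriv
  exact this

lemma pdx_sub {f g : ℝ × ℝ → ℂ} (hf : Differentiable ℝ f) (hg : Differentiable ℝ g) (p : ℝ × ℝ) :
    pdx' (fun q => f q - g q) p = pdx' f p - pdx' g p := by
  have := ((hasDerivAt_pdx hf p).sub (hasDerivAt_pdx hg p)).deriv
  exact this

lemma pdy_sub {f g : ℝ × ℝ → ℂ} (hf : Differentiable ℝ f) (hg : Differentiable ℝ g) (p : ℝ × ℝ) :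
    pdy' (fun q => f q - g q) p = pdy' f p - pdy' g p := by
  have := ((hasDerivAt_pdy hf p).sub (hasDerivAt_pdy hg p)).deriv
  exact this

lemma pdx_const (c : ℂ) (p : ℝ × ℝ) : pdx' (fun _ => c) p = 0 := by simp [pdx', pdx]
lemma pdy_const (c : ℂ) (p : ℝ × ℝ) : pdy' (fun _ => c) p = 0 := by simp [pdy', pdy]


lemma key_pointwise {f g h u v w : ℝ × ℝ → ℂ} (hf : ContDiff ℝ ∞ f) (hg : ContDiff ℝ ∞ g)
    (hh : ContDiff ℝ ∞ h) (hu : ContDiff ℝ ∞ u) (hv : ContDiff ℝ ∞ v)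
    (hw : ContDiff ℝ ∞ w) (p : ℝ × ℝ) :
    ((f p * pdx' g p - pdx' f p * g p) * pdy' w p
      - h p * pdy' (fun q => f q * pdx' v q + 2 * pdx' f q * v q - g q * pdx' u q - 2 * pdx' g q * u q) p)
    + ((g p * pdx' h p - pdx' g p * h p) * pdy' u p
      - f p * pdy' (fun q => g q * pdx' w q + 2 * pdx' g q * w q - h q * pdx' v q - 2 * pdx' h q * v q) p)
    + ((h p * pdx' f p - pdx' h p * f p) * pdy' v p
      - g p * pdy' (fun q => h q * pdx' u q + 2 * pdx' h q * u q - f q * pdx' w q - 2 * pdx' f q * w q) p)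
    = pdx' (fun q => f q * g q * pdy' w q - f q * h q * pdy' v q + 2 * (g q * pdy' f q * w q)
        + g q * h q * pdy' u q - 2 * (h q * pdy' f q * v q) + 2 * (h q * pdy' g q * u q)) p
    + pdy' (fun q => f q * h q * pdx' v q + 2 * (f q * pdx' h q * v q) - 2 * (f q * pdx' g q * w q)
        - f q * g q * pdx' w q - 2 * (g q * pdx' h q * u q) - g q * h q * pdx' u q) p := by
  have Df : Differentiable ℝ f := hf.differentiable (by norm_num)
  have Dg : Differentiable ℝ g := hg.differentiable (by norm_num)
  have Dh : Differentiable ℝ h := hh.differentiable (by norm_num)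
  have Du : Differentiable ℝ u := hu.differentiable (by norm_num)
  have Dv : Differentiable ℝ v := hv.differentiable (by norm_num)
  have Dw : Differentiable ℝ w := hw.differentiable (by norm_num)
  have Dfx : Differentiable ℝ (pdx' f) := (contDiff_pdx' hf).differentiable (by norm_num)
  have Dgx : Differentiable ℝ (pdx' g) := (contDiff_pdx' hg).differentiable (by norm_num)
  have Dhx : Differentiable ℝ (pdx' h) := (contDiff_pdx' hh).differentiable (by norm_num)
  have Dux : Differentiable ℝ (pdx' u) := (contDiff_pdx' hu).differentiable (by norm_num)
  have Dvx : Differentiable ℝ (pdx' v) := (contDiff_pdx' hv).differentiable (by norm_num)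
  have Dwx : Differentiable ℝ (pdx' w) := (contDiff_pdx' hw).differentiable (by norm_num)
  have Dfy : Differentiable ℝ (pdy' f) := (contDiff_pdy' hf).differentiable (by norm_num)
  have Dgy : Differentiable ℝ (pdy' g) := (contDiff_pdy' hg).differentiable (by norm_num)
  have Dhy : Differentiable ℝ (pdy' h) := (contDiff_pdy' hh).differentiable (by norm_num)
  have Duy : Differentiable ℝ (pdy' u) := (contDiff_pdy' hu).differentiable (by norm_num)
  have Dvy : Differentiable ℝ (pdy' v) := (contDiff_pdy' hv).differentiable (by norm_num)
  have Dwy : Differentiable ℝ (pdy' w) := (contDiff_pdy' hw).differentiable (by norm_num)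
  have cf := (pdy_pdx_eq_pdx_pdy hf p).symm
  have cg := (pdy_pdx_eq_pdx_pdy hg p).symm
  have ch := (pdy_pdx_eq_pdx_pdy hh p).symm
  have cu := (pdy_pdx_eq_pdx_pdy hu p).symm
  have cv := (pdy_pdx_eq_pdx_pdy hv p).symm
  have cw := (pdy_pdx_eq_pdx_pdy hw p).symm
  simp (disch := fun_prop) only
    [pdx_mul, pdx_sub, pdx_add, pdy_mul, pdy_sub, pdy_add, pdx_const, pdy_const]
  simp only [cf, cg, ch, cu, cv, cw]
  ring

open MeasureTheory in
lemma smoothPer2_pdx' {f : ℝ × ℝ → ℂ} (hf : SmoothPer2 f) : SmoothPer2 (pdx' f) := by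
  refine ⟨contDiff_pdx' hf.1, fun p => ?_, fun p => ?_⟩
  · have hper : (fun t => f (t + 2 * π, p.2)) = fun t => f (t, p.2) :=
      funext fun t => hf.2.1 (t, p.2)
    calc pdx' f (p.1 + 2 * π, p.2) = deriv (fun t => f (t, p.2)) (p.1 + 2 * π) := rfl
      _ = deriv (fun t => f (t + 2 * π, p.2)) p.1 := (deriv_comp_add_const _ _ _).symm
      _ = pdx' f p := by rw [hper]; rfl
  · have hper : (fun t => f (t, p.2 + 2 * π)) = fun t => f (t, p.2) :=
      funext fun t => hf.2.2 (t, p.2)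
    calc pdx' f (p.1, p.2 + 2 * π) = deriv (fun t => f (t, p.2 + 2 * π)) p.1 := rfl
      _ = pdx' f p := by rw [hper]; rfl

open MeasureTheory in
lemma smoothPer2_pdy' {f : ℝ × ℝ → ℂ} (hf : SmoothPer2 f) : SmoothPer2 (pdy' f) := by
  refine ⟨contDiff_pdy' hf.1, fun p => ?_, fun p => ?_⟩
  · have hper : (fun t => f (p.1 + 2 * π, t)) = fun t => f (p.1, t) :=
      funext fun t => hf.2.1 (p.1, t)
    calc pdy' f (p.1 + 2 * π, p.2) = deriv (fun t => f (p.1 + 2 * π, t)) p.2 := rfl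
      _ = pdy' f p := by rw [hper]; rfl
  · have hper : (fun t => f (p.1, t + 2 * π)) = fun t => f (p.1, t) :=
      funext fun t => hf.2.2 (p.1, t)
    calc pdy' f (p.1, p.2 + 2 * π) = deriv (fun t => f (p.1, t)) (p.2 + 2 * π) := rfl
      _ = deriv (fun t => f (p.1, t + 2 * π)) p.2 := (deriv_comp_add_const _ _ _).symm
      _ = pdy' f p := by rw [hper]; rfl

protected lemma SmoothPer2.mul {f g : ℝ × ℝ → ℂ} (hf : SmoothPer2 f) (hg : SmoothPer2 g) :
    SmoothPer2 (fun p => f p * g p) :=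
  ⟨hf.1.mul hg.1, fun p => by dsimp only; rw [hf.2.1 p, hg.2.1 p],
    fun p => by dsimp only; rw [hf.2.2 p, hg.2.2 p]⟩

protected lemma SmoothPer2.add {f g : ℝ × ℝ → ℂ} (hf : SmoothPer2 f) (hg : SmoothPer2 g) :
    SmoothPer2 (fun p => f p + g p) :=
  ⟨hf.1.add hg.1, fun p => by dsimp only; rw [hf.2.1 p, hg.2.1 p],
    fun p => by dsimp only; rw [hf.2.2 p, hg.2.2 p]⟩

protected lemma SmoothPer2.sub {f g : ℝ × ℝ → ℂ} (hf : SmoothPer2 f) (hg : SmoothPer2 g) :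
    SmoothPer2 (fun p => f p - g p) :=
  ⟨hf.1.sub hg.1, fun p => by dsimp only; rw [hf.2.1 p, hg.2.1 p],
    fun p => by dsimp only; rw [hf.2.2 p, hg.2.2 p]⟩

protected lemma SmoothPer2.const_mul {f : ℝ × ℝ → ℂ} (c : ℂ) (hf : SmoothPer2 f) :
    SmoothPer2 (fun p => c * f p) :=
  ⟨contDiff_const.mul hf.1, fun p => by dsimp only; rw [hf.2.1 p],
    fun p => by dsimp only; rw [hf.2.2 p]⟩

open MeasureTheory in
lemma integral_pdx_eq_zero {A : ℝ × ℝ → ℂ} (hA : SmoothPer2 A) (y : ℝ) :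
    (∫ x in (0:ℝ)..(2 * π), pdx' A (x, y)) = 0 := by
  have hder : ∀ x ∈ Set.uIcc (0:ℝ) (2 * π), DifferentiableAt ℝ (fun t => A (t, y)) x :=
    fun x _ =>
      ((hA.1.differentiable (by norm_num)).comp
        (differentiable_id.prodMk (differentiable_const y))) x
  have hcont : Continuous (fun x => pdx' A (x, y)) :=
    (contDiff_pdx' hA.1).continuous.comp (continuous_id.prodMk continuous_const)
  have hint : IntervalIntegrable (deriv (fun t => A (t, y))) volume 0 (2 * π) :=
    hcont.intervalIntegrable _ _
  calc (∫ x in (0:ℝ)..(2 * π), pdx' A (x, y))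
      = ∫ x in (0:ℝ)..(2 * π), deriv (fun t => A (t, y)) x := rfl
    _ = A (2 * π, y) - A (0, y) := intervalIntegral.integral_deriv_eq_sub hder hint
    _ = 0 := by rw [show A (2 * π, y) = A (0, y) by simpa using hA.2.1 (0, y), sub_self]

open MeasureTheory in
lemma integral_pdy_eq_zero {B : ℝ × ℝ → ℂ} (hB : SmoothPer2 B) (x : ℝ) :
    (∫ y in (0:ℝ)..(2 * π), pdy' B (x, y)) = 0 := by
  have hder : ∀ y ∈ Set.uIcc (0:ℝ) (2 * π), DifferentiableAt ℝ (fun t => B (x, t)) y :=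
    fun y _ =>
      ((hB.1.differentiable (by norm_num)).comp
        ((differentiable_const x).prodMk differentiable_id)) y
  have hcont : Continuous (fun y => pdy' B (x, y)) :=
    (contDiff_pdy' hB.1).continuous.comp (continuous_const.prodMk continuous_id)
  have hint : IntervalIntegrable (deriv (fun t => B (x, t))) volume 0 (2 * π) :=
    hcont.intervalIntegrable _ _
  calc (∫ y in (0:ℝ)..(2 * π), pdy' B (x, y))
      = ∫ y in (0:ℝ)..(2 * π), deriv (fun t => B (x, t)) y := rfl
    _ = B (x, 2 * π) - B (x, 0) := intervalIntegral.integral_deriv_eq_sub hder hint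
    _ = 0 := by rw [show B (x, 2 * π) = B (x, 0) by simpa using hB.2.2 (x, 0), sub_self]

open MeasureTheory in
lemma integ2_pdx_eq_zero {A : ℝ × ℝ → ℂ} (hA : SmoothPer2 A) : integ2 (pdx' A) = 0 := by
  unfold integ2
  have : ∀ y : ℝ, (∫ x in (0:ℝ)..(2 * π), pdx' A (x, y)) = 0 := integral_pdx_eq_zero hA
  simp only [this, intervalIntegral.integral_zero]

open MeasureTheory in
lemma integ2_pdy_eq_zero {B : ℝ × ℝ → ℂ} (hB : SmoothPer2 B) : integ2 (pdy' B) = 0 := by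
  have h2π : (0:ℝ) ≤ 2 * π := by positivity
  have hc : Continuous (Function.uncurry fun y x : ℝ => pdy' B (x, y)) :=
    (contDiff_pdy' hB.1).continuous.comp (continuous_snd.prodMk continuous_fst)
  have hint : Integrable (Function.uncurry fun y x : ℝ => pdy' B (x, y))
      ((volume.restrict (Set.Ioc (0:ℝ) (2 * π))).prod
        (volume.restrict (Set.Ioc (0:ℝ) (2 * π)))) := by
    rw [Measure.prod_restrict, ← Measure.volume_eq_prod]
    exact (hc.continuousOn.integrableOn_compact (isCompact_Icc.prod isCompact_Icc)).mono_set
      (Set.prod_mono Set.Ioc_subset_Icc_self Set.Ioc_subset_Icc_self)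
  have hswap := integral_integral_swap hint
  have hzero : ∀ x : ℝ, (∫ y in Set.Ioc (0:ℝ) (2 * π), pdy' B (x, y)) = 0 := fun x => by
    rw [← intervalIntegral.integral_of_le h2π]; exact integral_pdy_eq_zero hB x
  calc integ2 (pdy' B)
      = ∫ y in Set.Ioc (0:ℝ) (2 * π), ∫ x in Set.Ioc (0:ℝ) (2 * π), pdy' B (x, y) := by
        unfold integ2; simp only [intervalIntegral.integral_of_le h2π]
    _ = ∫ x in Set.Ioc (0:ℝ) (2 * π), ∫ y in Set.Ioc (0:ℝ) (2 * π), pdy' B (x, y) := hswap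
    _ = 0 := by simp only [hzero, MeasureTheory.integral_zero]

open MeasureTheory in
lemma integ2_add {k₁ k₂ : ℝ × ℝ → ℂ} (h1 : Continuous k₁) (h2 : Continuous k₂) :
    integ2 (fun p => k₁ p + k₂ p) = integ2 k₁ + integ2 k₂ := by
  have hin : ∀ (k : ℝ × ℝ → ℂ), Continuous k → ∀ y : ℝ,
      IntervalIntegrable (fun x => k (x, y)) volume 0 (2 * π) := fun k hk y =>
    (hk.comp (continuous_id.prodMk continuous_const)).intervalIntegrable _ _
  have houter : ∀ (k : ℝ × ℝ → ℂ), Continuous k →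
      Continuous (fun y => ∫ x in (0:ℝ)..(2 * π), k (x, y)) := fun k hk =>
    intervalIntegral.continuous_parametric_intervalIntegral_of_continuous'
      (f := fun y x => k (x, y)) (hk.comp (continuous_snd.prodMk continuous_fst)) _ _
  have hinner : (fun y => ∫ x in (0:ℝ)..(2 * π), (k₁ (x, y) + k₂ (x, y)))
      = fun y => (∫ x in (0:ℝ)..(2 * π), k₁ (x, y)) + ∫ x in (0:ℝ)..(2 * π), k₂ (x, y) :=
    funext fun y => intervalIntegral.integral_add (hin _ h1 y) (hin _ h2 y)
  calc integ2 (fun p => k₁ p + k₂ p)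
      = ∫ y in (0:ℝ)..(2 * π),
          ((∫ x in (0:ℝ)..(2 * π), k₁ (x, y)) + ∫ x in (0:ℝ)..(2 * π), k₂ (x, y)) := by
        unfold integ2; rw [hinner]
    _ = integ2 k₁ + integ2 k₂ :=
        intervalIntegral.integral_add
          ((houter _ h1).intervalIntegrable _ _) ((houter _ h2).intervalIntegrable _ _)

lemma integ2_neg (k : ℝ × ℝ → ℂ) : integ2 (fun p => -k p) = -integ2 k := by
  unfold integ2; simp only [intervalIntegral.integral_neg]


/-- **`μ₂` is a 2-cocycle on `g̃` (central extension of Kac–Moody type)**: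
`μ₂((f,u),(g,v)) = ∫∫ (f·v_y − g·u_y) dx dy` is antisymmetric and satisfies the cocycle
identity `μ₂([a,b],c) + μ₂([b,c],a) + μ₂([c,a],b) = 0` on `g̃`. -/
theorem mu2_is_two_cocycle :
    (∀ a b : F2 × F2, MemG a → MemG b → mu2 a b = - mu2 b a) ∧
    (∀ a b d : F2 × F2, MemG a → MemG b → MemG d →
      mu2 (gBracket a b) d + mu2 (gBracket b d) a + mu2 (gBracket d a) b = 0) := by
  constructor
  · rintro ⟨f, u⟩ ⟨g, v⟩ _ _
    show integ2 (fun p => f p * pdy v p - g p * pdy u p)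
      = - integ2 (fun p => g p * pdy u p - f p * pdy v p)
    rw [show (fun p => f p * pdy v p - g p * pdy u p)
        = fun p => -((fun q => g q * pdy u q - f q * pdy v q) p) from funext fun p => by ring]
    exact integ2_neg _
  · rintro ⟨f, u⟩ ⟨g, v⟩ ⟨h, w⟩ ⟨hf, hu⟩ ⟨hg, hv⟩ ⟨hh, hw⟩
    show integ2 (fun p => (f p * pdx' g p - pdx' f p * g p) * pdy' w p
        - h p * pdy' (fun q => f q * pdx' v q + 2 * pdx' f q * v q
            - g q * pdx' u q - 2 * pdx' g q * u q) p)
      + integ2 (fun p => (g p * pdx' h p - pdx' g p * h p) * pdy' u p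
        - f p * pdy' (fun q => g q * pdx' w q + 2 * pdx' g q * w q
            - h q * pdx' v q - 2 * pdx' h q * v q) p)
      + integ2 (fun p => (h p * pdx' f p - pdx' h p * f p) * pdy' v p
        - g p * pdy' (fun q => h q * pdx' u q + 2 * pdx' h q * u q
            - f q * pdx' w q - 2 * pdx' f q * w q) p) = 0
    set S₁ : ℝ × ℝ → ℂ := fun p => (f p * pdx' g p - pdx' f p * g p) * pdy' w p
        - h p * pdy' (fun q => f q * pdx' v q + 2 * pdx' f q * v q
            - g q * pdx' u q - 2 * pdx' g q * u q) p with hS1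
    set S₂ : ℝ × ℝ → ℂ := fun p => (g p * pdx' h p - pdx' g p * h p) * pdy' u p
        - f p * pdy' (fun q => g q * pdx' w q + 2 * pdx' g q * w q
            - h q * pdx' v q - 2 * pdx' h q * v q) p with hS2
    set S₃ : ℝ × ℝ → ℂ := fun p => (h p * pdx' f p - pdx' h p * f p) * pdy' v p
        - g p * pdy' (fun q => h q * pdx' u q + 2 * pdx' h q * u q
            - f q * pdx' w q - 2 * pdx' f q * w q) p with hS3
    set Af : ℝ × ℝ → ℂ := fun q => f q * g q * pdy' w q - f q * h q * pdy' v q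
        + 2 * (g q * pdy' f q * w q) + g q * h q * pdy' u q - 2 * (h q * pdy' f q * v q)
        + 2 * (h q * pdy' g q * u q) with hAf
    set Bf : ℝ × ℝ → ℂ := fun q => f q * h q * pdx' v q + 2 * (f q * pdx' h q * v q)
        - 2 * (f q * pdx' g q * w q) - f q * g q * pdx' w q - 2 * (g q * pdx' h q * u q)
        - g q * h q * pdx' u q with hBf
    have cfx := contDiff_pdx' hf.1
    have cgx := contDiff_pdx' hg.1
    have chx := contDiff_pdx' hh.1
    have cux := contDiff_pdx' hu.1
    have cvx := contDiff_pdx' hv.1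
    have cwx := contDiff_pdx' hw.1
    have cfy := contDiff_pdy' hf.1
    have cgy := contDiff_pdy' hg.1
    have chy := contDiff_pdy' hh.1
    have cuy := contDiff_pdy' hu.1
    have cvy := contDiff_pdy' hv.1
    have cwy := contDiff_pdy' hw.1
    have cB1 : ContDiff ℝ ∞ (fun q => f q * pdx' v q + 2 * pdx' f q * v q
        - g q * pdx' u q - 2 * pdx' g q * u q) :=
      (((hf.1.mul cvx).add ((contDiff_const.mul cfx).mul hv.1)).sub (hg.1.mul cux)).sub
        ((contDiff_const.mul cgx).mul hu.1)
    have cB2 : ContDiff ℝ ∞ (fun q => g q * pdx' w q + 2 * pdx' g q * w q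
        - h q * pdx' v q - 2 * pdx' h q * v q) :=
      (((hg.1.mul cwx).add ((contDiff_const.mul cgx).mul hw.1)).sub (hh.1.mul cvx)).sub
        ((contDiff_const.mul chx).mul hv.1)
    have cB3 : ContDiff ℝ ∞ (fun q => h q * pdx' u q + 2 * pdx' h q * u q
        - f q * pdx' w q - 2 * pdx' f q * w q) :=
      (((hh.1.mul cux).add ((contDiff_const.mul chx).mul hu.1)).sub (hf.1.mul cwx)).sub
        ((contDiff_const.mul cfx).mul hw.1)
    have hcS1 : Continuous S₁ := by
      rw [hS1]
      exact (((hf.1.continuous.mul cgx.continuous).sub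
        (cfx.continuous.mul hg.1.continuous)).mul cwy.continuous).sub
        (hh.1.continuous.mul (contDiff_pdy' cB1).continuous)
    have hcS2 : Continuous S₂ := by
      rw [hS2]
      exact (((hg.1.continuous.mul chx.continuous).sub
        (cgx.continuous.mul hh.1.continuous)).mul cuy.continuous).sub
        (hf.1.continuous.mul (contDiff_pdy' cB2).continuous)
    have hcS3 : Continuous S₃ := by
      rw [hS3]
      exact (((hh.1.continuous.mul cfx.continuous).sub
        (chx.continuous.mul hf.1.continuous)).mul cvy.continuous).sub
        (hg.1.continuous.mul (contDiff_pdy' cB3).continuous)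
    have pA : SmoothPer2 Af := by
      rw [hAf]
      exact ((((((hf.mul hg).mul (smoothPer2_pdy' hw)).sub
        ((hf.mul hh).mul (smoothPer2_pdy' hv))).add
        (SmoothPer2.const_mul 2 ((hg.mul (smoothPer2_pdy' hf)).mul hw))).add
        ((hg.mul hh).mul (smoothPer2_pdy' hu))).sub
        (SmoothPer2.const_mul 2 ((hh.mul (smoothPer2_pdy' hf)).mul hv))).add
        (SmoothPer2.const_mul 2 ((hh.mul (smoothPer2_pdy' hg)).mul hu))
    have pB : SmoothPer2 Bf := by
      rw [hBf]
      exact ((((((hf.mul hh).mul (smoothPer2_pdx' hv)).add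
        (SmoothPer2.const_mul 2 ((hf.mul (smoothPer2_pdx' hh)).mul hv))).sub
        (SmoothPer2.const_mul 2 ((hf.mul (smoothPer2_pdx' hg)).mul hw))).sub
        ((hf.mul hg).mul (smoothPer2_pdx' hw))).sub
        (SmoothPer2.const_mul 2 ((hg.mul (smoothPer2_pdx' hh)).mul hu))).sub
        ((hg.mul hh).mul (smoothPer2_pdx' hu))
    have e : integ2 (fun p => S₁ p + S₂ p + S₃ p) = integ2 S₁ + integ2 S₂ + integ2 S₃ := by
      rw [integ2_add (k₁ := fun p => S₁ p + S₂ p) (hcS1.add hcS2) hcS3, integ2_add hcS1 hcS2]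
    rw [← e]
    have key : (fun p => S₁ p + S₂ p + S₃ p) = fun p => pdx' Af p + pdy' Bf p := by
      rw [hS1, hS2, hS3, hAf, hBf]
      exact funext fun p => key_pointwise hf.1 hg.1 hh.1 hu.1 hv.1 hw.1 p
    rw [key, integ2_add (contDiff_pdx' pA.1).continuous (contDiff_pdy' pB.1).continuous,
      integ2_pdx_eq_zero pA, integ2_pdy_eq_zero pB, add_zero]
end
end

section
/- Define S₁, S₂ : g̃ → g̃ by S₁(f,u) = (0, f_{xxx}) and S₂(f,u) = (f_y, u_y). Then both maps satisfy the 1-cocycle identity S_i([a,b]) = [a, S_i(b)] − [b, S_i(a)] for all a, b ∈ g̃. (These are the Souriau cocycles associated with the central-extension 2-cocycles μ₁ and μ₂, the coadjoint action of g̃ being identified with the adjoint action via the invariant pairing.) -/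
open Real intervalIntegral
open scoped ContDiff

noncomputable section

/-- The Souriau 1-cocycle `S₁(f,u) = (0, f_{xxx})` associated with the
Virasoro-type central extension `μ₁` of `g̃`. -/
def S1 (a : F2 × F2) : F2 × F2 := (fun _ => 0, pdx (pdx (pdx a.1)))

/-- The Souriau 1-cocycle `S₂(f,u) = (f_y, u_y)` associated with the
Kac–Moody-type central extension `μ₂` of `g̃`. -/
def S2 (a : F2 × F2) : F2 × F2 := (pdy a.1, pdy a.2)

/-! ### Auxiliary lemmas -/

lemma pdx_eq_fderiv {f : F2} (hf : ContDiff ℝ ∞ f) :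
    pdx f = fun p => fderiv ℝ f p ((1:ℝ), (0:ℝ)) := by
  funext p
  have hf' : HasFDerivAt f (fderiv ℝ f p) p :=
    (hf.differentiable (by decide) p).hasFDerivAt
  have hline : HasDerivAt (fun t : ℝ => (t, p.2)) ((1:ℝ), (0:ℝ)) p.1 :=
    HasDerivAt.prodMk (hasDerivAt_id p.1) (hasDerivAt_const p.1 p.2)
  have := (hf'.comp_hasDerivAt p.1 (by simpa using hline)).deriv
  simpa [pdx, Function.comp_def] using this

lemma pdy_eq_fderiv {f : F2} (hf : ContDiff ℝ ∞ f) :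
    pdy f = fun p => fderiv ℝ f p ((0:ℝ), (1:ℝ)) := by
  funext p
  have hf' : HasFDerivAt f (fderiv ℝ f p) p :=
    (hf.differentiable (by decide) p).hasFDerivAt
  have hline : HasDerivAt (fun t : ℝ => (p.1, t)) ((0:ℝ), (1:ℝ)) p.2 :=
    HasDerivAt.prodMk (hasDerivAt_const p.2 p.1) (hasDerivAt_id p.2)
  have := (hf'.comp_hasDerivAt p.2 (by simpa using hline)).deriv
  simpa [pdy, Function.comp_def] using this

lemma fderiv_apply_smooth {f : F2} (hf : ContDiff ℝ ∞ f) (v : ℝ × ℝ) :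
    ContDiff ℝ ∞ (fun p => fderiv ℝ f p v) :=
  (ContinuousLinearMap.apply ℝ ℂ v).contDiff.comp (hf.fderiv_right (m := ∞) le_rfl)

lemma pdx_smooth {f : F2} (hf : ContDiff ℝ ∞ f) : ContDiff ℝ ∞ (pdx f) := by
  rw [pdx_eq_fderiv hf]; exact fderiv_apply_smooth hf _

lemma pdy_smooth {f : F2} (hf : ContDiff ℝ ∞ f) : ContDiff ℝ ∞ (pdy f) := by
  rw [pdy_eq_fderiv hf]; exact fderiv_apply_smooth hf _

/-- Clairaut's theorem: mixed partials of a smooth function commute. -/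
lemma clairaut {f : F2} (hf : ContDiff ℝ ∞ f) : pdx (pdy f) = pdy (pdx f) := by
  rw [pdx_eq_fderiv (pdy_smooth hf), pdy_eq_fderiv (pdx_smooth hf),
      pdx_eq_fderiv hf, pdy_eq_fderiv hf]
  funext p
  have hsym : IsSymmSndFDerivAt ℝ f p := hf.contDiffAt.isSymmSndFDerivAt (by rw [minSmoothness_of_isRCLikeNormedField]; decide)
  have hD : HasFDerivAt (fderiv ℝ f) (fderiv ℝ (fderiv ℝ f) p) p :=
    ((hf.fderiv_right (m := ∞) le_rfl).differentiable (by decide) p).hasFDerivAt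
  have e1 : fderiv ℝ (fun q => fderiv ℝ f q ((0:ℝ),(1:ℝ))) p ((1:ℝ),(0:ℝ))
      = fderiv ℝ (fderiv ℝ f) p ((1:ℝ),(0:ℝ)) ((0:ℝ),(1:ℝ)) := by
    have := ((ContinuousLinearMap.apply ℝ ℂ ((0:ℝ),(1:ℝ))).hasFDerivAt.comp p hD).fderiv
    rw [show (fun q => fderiv ℝ f q ((0:ℝ),(1:ℝ)))
        = (ContinuousLinearMap.apply ℝ ℂ ((0:ℝ),(1:ℝ))) ∘ (fderiv ℝ f) from rfl, this]
    rfl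
  have e2 : fderiv ℝ (fun q => fderiv ℝ f q ((1:ℝ),(0:ℝ))) p ((0:ℝ),(1:ℝ))
      = fderiv ℝ (fderiv ℝ f) p ((0:ℝ),(1:ℝ)) ((1:ℝ),(0:ℝ)) := by
    have := ((ContinuousLinearMap.apply ℝ ℂ ((1:ℝ),(0:ℝ))).hasFDerivAt.comp p hD).fderiv
    rw [show (fun q => fderiv ℝ f q ((1:ℝ),(0:ℝ)))
        = (ContinuousLinearMap.apply ℝ ℂ ((1:ℝ),(0:ℝ))) ∘ (fderiv ℝ f) from rfl, this]
    rfl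
  rw [e1, e2, hsym.eq]

lemma sliceX {f : F2} (hf : ContDiff ℝ ∞ f) (y : ℝ) :
    ContDiff ℝ ∞ (fun t => f (t, y)) :=
  hf.comp (contDiff_id.prodMk contDiff_const)

lemma sliceY {f : F2} (hf : ContDiff ℝ ∞ f) (x : ℝ) :
    ContDiff ℝ ∞ (fun t => f (x, t)) :=
  hf.comp (contDiff_const.prodMk contDiff_id)

lemma dsmooth {F : ℝ → ℂ} (hF : ContDiff ℝ ∞ F) : ContDiff ℝ ∞ (deriv F) :=
  (contDiff_infty_iff_deriv.mp hF).2

lemma hda {F : ℝ → ℂ} (hF : ContDiff ℝ ∞ F) (t : ℝ) : HasDerivAt F (deriv F t) t :=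
  (hF.differentiable (by decide) t).hasDerivAt

/-- Pointwise derivative of `P·Q − R·S`. -/
lemma dcomb2 {P Q R S : ℝ → ℂ} (hP : ContDiff ℝ ∞ P) (hQ : ContDiff ℝ ∞ Q)
    (hR : ContDiff ℝ ∞ R) (hS : ContDiff ℝ ∞ S) (t : ℝ) :
    deriv (fun s => P s * Q s - R s * S s) t
      = (deriv P t * Q t + P t * deriv Q t) - (deriv R t * S t + R t * deriv S t) := by
  have H : HasDerivAt (fun s => P s * Q s - R s * S s) _ t :=
    ((hda hP t).mul (hda hQ t)).sub ((hda hR t).mul (hda hS t))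
  rw [H.deriv]

/-- Pointwise derivative of `P·Q + 2·R·S − T·U − 2·V·W`. -/
lemma dcomb8 {P Q R S T U V W : ℝ → ℂ} (hP : ContDiff ℝ ∞ P) (hQ : ContDiff ℝ ∞ Q)
    (hR : ContDiff ℝ ∞ R) (hS : ContDiff ℝ ∞ S) (hT : ContDiff ℝ ∞ T)
    (hU : ContDiff ℝ ∞ U) (hV : ContDiff ℝ ∞ V) (hW : ContDiff ℝ ∞ W) (t : ℝ) :
    deriv (fun s => P s * Q s + 2 * R s * S s - T s * U s - 2 * V s * W s) t
      = (deriv P t * Q t + P t * deriv Q t) + 2 * (deriv R t * S t + R t * deriv S t)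
        - (deriv T t * U t + T t * deriv U t)
        - 2 * (deriv V t * W t + V t * deriv W t) := by
  have H : HasDerivAt (fun s => P s * Q s + 2 * R s * S s - T s * U s - 2 * V s * W s) _ t :=
    ((((hda hP t).mul (hda hQ t)).add (((hda hR t).const_mul 2).mul (hda hS t))).sub
      ((hda hT t).mul (hda hU t))).sub (((hda hV t).const_mul 2).mul (hda hW t))
  rw [H.deriv]; ring

/-- The key one-dimensional Virasoro computation. -/
lemma key1D {F G : ℝ → ℂ} (hF : ContDiff ℝ ∞ F) (hG : ContDiff ℝ ∞ G) (x : ℝ) :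
    deriv (deriv (deriv (fun t => F t * deriv G t - deriv F t * G t))) x
      = F x * deriv (deriv (deriv (deriv G))) x
        + 2 * deriv F x * deriv (deriv (deriv G)) x
        - G x * deriv (deriv (deriv (deriv F))) x
        - 2 * deriv G x * deriv (deriv (deriv F)) x := by
  have hF1 := dsmooth hF; have hF2 := dsmooth hF1; have hF3 := dsmooth hF2
  have hG1 := dsmooth hG; have hG2 := dsmooth hG1; have hG3 := dsmooth hG2
  have e1 : deriv (fun t => F t * deriv G t - deriv F t * G t)
      = fun t => F t * deriv (deriv G) t - deriv (deriv F) t * G t := by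
    funext t; rw [dcomb2 hF hG1 hF1 hG t]; ring
  have e2 : deriv (fun t => F t * deriv (deriv G) t - deriv (deriv F) t * G t)
      = fun t => (deriv F t * deriv (deriv G) t + F t * deriv (deriv (deriv G)) t)
          - (deriv (deriv (deriv F)) t * G t + deriv (deriv F) t * deriv G t) := by
    funext t; exact dcomb2 hF hG2 hF2 hG t
  rw [e1, e2]
  have H : HasDerivAt (fun t => (deriv F t * deriv (deriv G) t + F t * deriv (deriv (deriv G)) t)
      - (deriv (deriv (deriv F)) t * G t + deriv (deriv F) t * deriv G t)) _ x :=
    (((hda hF1 x).mul (hda hG2 x)).add ((hda hF x).mul (hda hG3 x))).sub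
      (((hda hF3 x).mul (hda hG x)).add ((hda hF2 x).mul (hda hG1 x)))
  rw [H.deriv]; ring

/-- **The Souriau cocycles of `g̃`.** The maps `S₁(f,u) = (0, f_{xxx})` and
`S₂(f,u) = (f_y, u_y)` both satisfy the 1-cocycle identity
`S_i([a,b]) = [a, S_i(b)] − [b, S_i(a)]` on the looped cotangent Virasoro algebra `g̃`
(whose coadjoint representation is identified with the adjoint one via the
invariant pairing). -/
theorem souriau_cocycles (a b : F2 × F2) (ha : MemG a) (hb : MemG b) :
    S1 (gBracket a b) = gBracket a (S1 b) - gBracket b (S1 a) ∧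
    S2 (gBracket a b) = gBracket a (S2 b) - gBracket b (S2 a) := by
  obtain ⟨⟨hf, -, -⟩, ⟨hu, -, -⟩⟩ := ha
  obtain ⟨⟨hg, -, -⟩, ⟨hv, -, -⟩⟩ := hb
  have hpz : pdx (fun _ : ℝ × ℝ => (0:ℂ)) = fun _ => 0 := by
    funext q; simp [pdx]
  constructor
  · apply Prod.ext
    · funext p
      simp [S1, gBracket, hpz, pdx]
    · funext p
      have hK : pdx (pdx (pdx (fun q => a.1 q * pdx b.1 q - pdx a.1 q * b.1 q))) p
          = a.1 p * pdx (pdx (pdx (pdx b.1))) p + 2 * pdx a.1 p * pdx (pdx (pdx b.1)) p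
            - b.1 p * pdx (pdx (pdx (pdx a.1))) p
            - 2 * pdx b.1 p * pdx (pdx (pdx a.1)) p :=
        key1D (sliceX hf p.2) (sliceX hg p.2) p.1
      simp only [S1, gBracket, Prod.snd_sub, Pi.sub_apply]
      rw [hK]
      simp only [hpz]
      ring
  · apply Prod.ext
    · funext p
      have hL : pdy (fun q => a.1 q * pdx b.1 q - pdx a.1 q * b.1 q) p
          = (pdy a.1 p * pdx b.1 p + a.1 p * pdy (pdx b.1) p)
            - (pdy (pdx a.1) p * b.1 p + pdx a.1 p * pdy b.1 p) :=
        dcomb2 (sliceY hf p.1) (sliceY (pdx_smooth hg) p.1)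
          (sliceY (pdx_smooth hf) p.1) (sliceY hg p.1) p.2
      simp only [S2, gBracket, Prod.fst_sub, Pi.sub_apply]
      rw [hL, clairaut hf, clairaut hg]
      ring
    · funext p
      have hL : pdy (fun q => a.1 q * pdx b.2 q + 2 * pdx a.1 q * b.2 q
            - b.1 q * pdx a.2 q - 2 * pdx b.1 q * a.2 q) p
          = (pdy a.1 p * pdx b.2 p + a.1 p * pdy (pdx b.2) p)
            + 2 * (pdy (pdx a.1) p * b.2 p + pdx a.1 p * pdy b.2 p)
            - (pdy b.1 p * pdx a.2 p + b.1 p * pdy (pdx a.2) p)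
            - 2 * (pdy (pdx b.1) p * a.2 p + pdx b.1 p * pdy a.2 p) :=
        dcomb8 (sliceY hf p.1) (sliceY (pdx_smooth hv) p.1)
          (sliceY (pdx_smooth hf) p.1) (sliceY hv p.1)
          (sliceY hg p.1) (sliceY (pdx_smooth hu) p.1)
          (sliceY (pdx_smooth hg) p.1) (sliceY hu p.1) p.2
      simp only [S2, gBracket, Prod.snd_sub, Pi.sub_apply]
      rw [hL, clairaut hf, clairaut hg, clairaut hu, clairaut hv]
      ring
end
end
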